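/- Let G be a directed mixed graph over micro-variables X whose joint distribution P_X has positive density, and suppose the pair (G, P_X) is σ-Markovian and σ-faithful. Let P be a partition of X with coarse graph co(G,P) and let S ⊆ P. Then two variable groups Y, Z ∈ P ∖ S are mutually conditionally independent given T = ∪_{W∈S} W if and only if they are pairwise conditionally independent given T. -/

import Mathlib

/-! ## Mixed graphs -/

/-- A mixed graph: directed, bidirected and undirected edges, no self-edges. -/
structure MixedGraph (V : Type) where
  dir : V → V → Prop
  bidir : V → V → Prop
  undir : V → V → Prop
  bidir_symm : ∀ {a b}, bidir a b → bidir b a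
  undir_symm : ∀ {a b}, undir a b → undir b a
  dir_irrefl : ∀ a, ¬ dir a a
  bidir_irrefl : ∀ a, ¬ bidir a a
  undir_irrefl : ∀ a, ¬ undir a a

namespace MixedGraph

variable {V I : Type}

/-- A directed mixed graph is a mixed graph without undirected edges. -/
def IsDMG (G : MixedGraph V) : Prop := ∀ a b, ¬ G.undir a b

/-- `a` and `b` lie in the same strongly connected component: there are directed
paths between them in both directions. -/
def Strongly (G : MixedGraph V) (a b : V) : Prop :=
  Relation.ReflTransGen G.dir a b ∧ Relation.ReflTransGen G.dir b a

lemma Strongly.refl (G : MixedGraph V) (a : V) : G.Strongly a a :=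
  ⟨Relation.ReflTransGen.refl, Relation.ReflTransGen.refl⟩

lemma Strongly.symm {G : MixedGraph V} {a b : V} (h : G.Strongly a b) : G.Strongly b a :=
  ⟨h.2, h.1⟩

/-- A graph is acyclic if it has no nontrivial directed closed walk. -/
def Acyclic (G : MixedGraph V) : Prop := ∀ a, ¬ Relation.TransGen G.dir a a

end MixedGraph

/-! ## Walks -/

/-- The four ways in which an edge can occur on a walk, as traversed from its
first node `a` to its second node `b`: `fw` is `a → b`, `bw` is `a ← b`,
`bi` is `a ↔ b` and `un` is `a − b`. -/
inductive StepKind | fw | bw | bi | un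
deriving DecidableEq

/-- A step of a walk: an ordered pair of nodes together with the kind of edge. -/
structure Step (V : Type) where
  a : V
  b : V
  k : StepKind

/-- The step is an actual edge of the graph `G`. -/
def Step.ok {V : Type} (G : MixedGraph V) (s : Step V) : Prop :=
  match s.k with
  | .fw => G.dir s.a s.b
  | .bw => G.dir s.b s.a
  | .bi => G.bidir s.a s.b
  | .un => G.undir s.a s.b

/-- The edge of the step has an arrowhead at its first node. -/
def Step.headA {V : Type} (s : Step V) : Prop := s.k = .bw ∨ s.k = .bi

/-- The edge of the step has an arrowhead at its second node. -/
def Step.headB {V : Type} (s : Step V) : Prop := s.k = .fw ∨ s.k = .bi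

namespace MixedGraph

variable {V I : Type}

/-- `IsWalk G x y L`: the list of steps `L` forms a walk from `x` to `y` in `G`. -/
inductive IsWalk (G : MixedGraph V) : V → V → List (Step V) → Prop
  | nil (a : V) : IsWalk G a a []
  | cons {c : V} (s : Step V) (L : List (Step V)) (hok : s.ok G)
      (hw : IsWalk G s.b c L) : IsWalk G s.a c (s :: L)

/-- `v` is a collider at junction `i` of the walk `L`: both edges adjacent to the
inner node `v` point into `v`. -/
def ColliderAt (L : List (Step V)) (i : ℕ) (v : V) : Prop :=
  ∃ s t, L[i]? = some s ∧ L[i+1]? = some t ∧ s.b = v ∧ t.a = v ∧ s.headB ∧ t.headA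

/-- `v` is a non-collider at junction `i` of the walk `L`. -/
def NonColliderAt (L : List (Step V)) (i : ℕ) (v : V) : Prop :=
  ∃ s t, L[i]? = some s ∧ L[i+1]? = some t ∧ s.b = v ∧ t.a = v ∧ ¬ (s.headB ∧ t.headA)

/-- The walk `L` from `x` to `y` is m-blocked by the node set `S`. -/
def MBlockedWalk (G : MixedGraph V) (S : Set V) (x y : V) (L : List (Step V)) : Prop :=
  x ∈ S ∨ y ∈ S ∨
  (∃ i v, ColliderAt L i v ∧ ∀ d, Relation.ReflTransGen G.dir v d → d ∉ S) ∨
  (∃ i v, NonColliderAt L i v ∧ v ∈ S)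

/-- The walk `L` from `x` to `y` is σ-blocked by the node set `S`. -/
def SigmaBlockedWalk (G : MixedGraph V) (S : Set V) (x y : V) (L : List (Step V)) : Prop :=
  x ∈ S ∨ y ∈ S ∨
  (∃ i v, ColliderAt L i v ∧ ∀ d, Relation.ReflTransGen G.dir v d → d ∉ S) ∨
  (∃ i s t, L[i]? = some s ∧ L[i+1]? = some t ∧ s.b = t.a ∧ ¬ (s.headB ∧ t.headA) ∧
    s.b ∈ S ∧
    (((s.k = .bw ∨ s.k = .un) ∧ ¬ G.Strongly s.b s.a) ∨
     ((t.k = .fw ∨ t.k = .un) ∧ ¬ G.Strongly t.a t.b)))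

/-- `x` and `y` are m-separated by `S` in `G`. -/
def MSep (G : MixedGraph V) (S : Set V) (x y : V) : Prop :=
  ∀ L, G.IsWalk x y L → G.MBlockedWalk S x y L

/-- `x` and `y` are σ-separated by `S` in `G`. -/
def SigmaSep (G : MixedGraph V) (S : Set V) (x y : V) : Prop :=
  ∀ L, G.IsWalk x y L → G.SigmaBlockedWalk S x y L

/-! ## Acyclification -/

/-- The acyclification of a mixed graph. -/
def acy (G : MixedGraph V) : MixedGraph V where
  dir a b := (∃ c, G.dir a c ∧ G.Strongly c b) ∧ ¬ G.Strongly a b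
  bidir a b := a ≠ b ∧ (G.Strongly a b ∨
    ∃ a' b', G.Strongly a a' ∧ G.Strongly b b' ∧ G.bidir a' b')
  undir a b := ¬ G.Strongly a b ∧ G.undir a b
  bidir_symm := by
    rintro a b ⟨hab, h | ⟨a', b', ha, hb, h⟩⟩
    · exact ⟨hab.symm, Or.inl h.symm⟩
    · exact ⟨hab.symm, Or.inr ⟨b', a', hb, ha, G.bidir_symm h⟩⟩
  undir_symm := by
    rintro a b ⟨h1, h2⟩
    exact ⟨fun h => h1 h.symm, G.undir_symm h2⟩
  dir_irrefl := fun a h => h.2 (Strongly.refl G a)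
  bidir_irrefl := fun a h => h.1 rfl
  undir_irrefl := fun a h => h.1 (Strongly.refl G a)

/-! ## Coarse graphs -/

/-- The coarse (quotient) graph of `G` with respect to the partition given by the
quotient map `q` onto the set of groups `I`. -/
def coarse (G : MixedGraph V) (q : V → I) : MixedGraph I where
  dir Y Z := Y ≠ Z ∧ ∃ y z, q y = Y ∧ q z = Z ∧ G.dir y z
  bidir Y Z := Y ≠ Z ∧ ∃ y z, q y = Y ∧ q z = Z ∧ G.bidir y z
  undir Y Z := Y ≠ Z ∧ ∃ y z, q y = Y ∧ q z = Z ∧ G.undir y z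
  bidir_symm := by
    rintro Y Z ⟨hne, y, z, hy, hz, h⟩
    exact ⟨hne.symm, z, y, hz, hy, G.bidir_symm h⟩
  undir_symm := by
    rintro Y Z ⟨hne, y, z, hy, hz, h⟩
    exact ⟨hne.symm, z, y, hz, hy, G.undir_symm h⟩
  dir_irrefl := fun Y h => h.1 rfl
  bidir_irrefl := fun Y h => h.1 rfl
  undir_irrefl := fun Y h => h.1 rfl

end MixedGraph

open MeasureTheory ProbabilityTheory

/-- The σ-algebra generated by the group `A` of the random variables `X v`. -/
def genOf {Ω V : Type} [MeasurableSpace Ω] (X : V → Ω → ℝ) (A : Set V) :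
    MeasurableSpace Ω :=
  ⨆ v ∈ A, MeasurableSpace.comap (X v) inferInstance

/-- Mutual conditional independence of the groups `Y` and `Z` of random variables
given the group `W`. -/
def GroupCI {Ω V : Type} [m : MeasurableSpace Ω] [StandardBorelSpace Ω]
    (μ : Measure Ω) [IsFiniteMeasure μ] (X : V → Ω → ℝ) (Y Z W : Set V) : Prop :=
  ∃ h : genOf X W ≤ m, ProbabilityTheory.CondIndep (genOf X W) (genOf X Y) (genOf X Z) h μ

/-- The joint distribution of the variables `X v` has a positive density. -/
def HasPositiveDensity {Ω V : Type} [MeasurableSpace Ω] [Fintype V] (μ : Measure Ω)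
    (X : V → Ω → ℝ) : Prop :=
  ∃ f : (V → ℝ) → ℝ, Measurable f ∧ (∀ x, 0 < f x) ∧
    Measure.map (fun ω v => X v ω) μ = volume.withDensity fun x => ENNReal.ofReal (f x)

open MeasureTheory ProbabilityTheory MixedGraph

variable {Ω V I : Type}

/-- `(G, μ)` is σ-Markovian: σ-separation implies conditional independence. -/
def SigmaMarkov [m : MeasurableSpace Ω] [StandardBorelSpace Ω] (G : MixedGraph V)
    (μ : Measure Ω) [IsFiniteMeasure μ] (X : V → Ω → ℝ) : Prop :=
  ∀ (a b : V) (S : Set V), G.SigmaSep S a b → GroupCI μ X {a} {b} S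

/-- `(G, μ)` is σ-faithful: conditional independence implies σ-separation. -/
def SigmaFaithful [m : MeasurableSpace Ω] [StandardBorelSpace Ω] (G : MixedGraph V)
    (μ : Measure Ω) [IsFiniteMeasure μ] (X : V → Ω → ℝ) : Prop :=
  ∀ (a b : V) (S : Set V), GroupCI μ X {a} {b} S → G.SigmaSep S a b

/-- `(G, μ)` is m-Markovian: m-separation implies conditional independence. -/
def MMarkov [m : MeasurableSpace Ω] [StandardBorelSpace Ω] (G : MixedGraph V)
    (μ : Measure Ω) [IsFiniteMeasure μ] (X : V → Ω → ℝ) : Prop :=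
  ∀ (a b : V) (S : Set V), G.MSep S a b → GroupCI μ X {a} {b} S

/-- The pair of the coarse graph `G.coarse q` and the distribution is σ-faithful on
the group level: mutual conditional independence of two groups given the union of
the groups in `S` implies their σ-separation by `S` in the coarse graph. -/
def SigmaFaithfulGrp [m : MeasurableSpace Ω] [StandardBorelSpace Ω] (G : MixedGraph V)
    (q : V → I) (μ : Measure Ω) [IsFiniteMeasure μ] (X : V → Ω → ℝ) : Prop :=
  ∀ (Y Z : I) (S : Set I),
    GroupCI μ X (q ⁻¹' {Y}) (q ⁻¹' {Z}) (q ⁻¹' S) → (G.coarse q).SigmaSep S Y Z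


namespace GraphAux

open MixedGraph

variable {V : Type} {G : MixedGraph V}

lemma isWalk_append {x y z : V} {L1 L2 : List (Step V)}
    (h1 : G.IsWalk x y L1) (h2 : G.IsWalk y z L2) : G.IsWalk x z (L1 ++ L2) := by
  induction h1 with
  | nil a => exact h2
  | cons s L hok hw ih => exact .cons s _ hok (ih h2)

lemma walk_head {x y : V} {L : List (Step V)} (h : G.IsWalk x y L) :
    ∀ t, L[0]? = some t → t.a = x := by
  cases h with
  | nil a => intro t ht; simp at ht
  | cons s L hok hw => intro t ht; simp at ht; rw [← ht]

lemma walk_adj {x y : V} {L : List (Step V)} (h : G.IsWalk x y L) :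
    ∀ (i : ℕ) (s t : Step V), L[i]? = some s → L[i+1]? = some t → s.b = t.a := by
  induction h with
  | nil a => intro i s t hs ht; simp at hs
  | cons u L hok hw ih =>
    intro i s t hs ht
    cases i with
    | zero =>
      simp only [List.getElem?_cons_zero, Option.some.injEq] at hs
      simp only [List.getElem?_cons_succ] at ht
      rw [← hs]
      exact (walk_head hw t ht).symm
    | succ n =>
      simp only [List.getElem?_cons_succ] at hs ht
      exact ih n s t hs ht

lemma walk_take {x y : V} {L : List (Step V)} (h : G.IsWalk x y L) :
    ∀ (i : ℕ) (s : Step V), L[i]? = some s → G.IsWalk x s.b (L.take (i+1)) := by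
  induction h with
  | nil a => intro i s hs; simp at hs
  | cons u L hok hw ih =>
    intro i s hs
    cases i with
    | zero =>
      simp only [List.getElem?_cons_zero, Option.some.injEq] at hs
      rw [← hs]
      exact .cons u _ hok (.nil u.b)
    | succ n =>
      simp only [List.getElem?_cons_succ] at hs
      exact .cons u _ hok (ih n s hs)

/-- Steps of a directed path given by a chain of nodes. -/
def pathSteps : V → List V → List (Step V)
  | _, [] => []
  | a, b :: l => ⟨a, b, .fw⟩ :: pathSteps b l

lemma pathSteps_isWalk {a : V} {l : List V} (h : List.Chain G.dir a l) :
    G.IsWalk a ((a :: l).getLast (List.cons_ne_nil a l)) (pathSteps a l) := by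
  induction l generalizing a with
  | nil => exact IsWalk.nil a
  | cons b l ih =>
    obtain ⟨hab, hchain⟩ := List.isChain_cons_cons.mp h
    have hh := ih (a := b) hchain
    have hlast : ((a :: b :: l).getLast (List.cons_ne_nil a (b :: l)))
        = ((b :: l).getLast (List.cons_ne_nil b l)) :=
      List.getLast_cons (List.cons_ne_nil b l)
    rw [show pathSteps a (b :: l) = ⟨a, b, .fw⟩ :: pathSteps b l from rfl, hlast]
    exact .cons ⟨a, b, .fw⟩ _ hab hh

lemma pathSteps_mem {a : V} {l : List V} (h : List.Chain G.dir a l) :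
    ∀ (i : ℕ) (s : Step V), (pathSteps a l)[i]? = some s →
      s.k = .fw ∧ Relation.ReflTransGen G.dir a s.a ∧ Relation.ReflTransGen G.dir a s.b := by
  induction l generalizing a with
  | nil => intro i s hs; simp [pathSteps] at hs
  | cons b l ih =>
    obtain ⟨hab, hchain⟩ := List.isChain_cons_cons.mp h
    intro i s hs
    cases i with
    | zero =>
      rw [show pathSteps a (b :: l) = ⟨a, b, .fw⟩ :: pathSteps b l from rfl] at hs
      simp only [List.getElem?_cons_zero, Option.some.injEq] at hs
      subst hs
      exact ⟨rfl, .refl, .single hab⟩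
    | succ n =>
      rw [show pathSteps a (b :: l) = ⟨a, b, .fw⟩ :: pathSteps b l from rfl] at hs
      simp only [List.getElem?_cons_succ] at hs
      obtain ⟨hk, h1, h2⟩ := ih hchain n s hs
      exact ⟨hk, .head hab h1, .head hab h2⟩

lemma not_blocked_parts {S : Set V} {x y : V} {L : List (Step V)}
    (h : ¬ G.SigmaBlockedWalk S x y L) :
    x ∉ S ∧ y ∉ S ∧
    (∀ i v, ColliderAt L i v → ∃ d, Relation.ReflTransGen G.dir v d ∧ d ∈ S) ∧
    (∀ i s t, L[i]? = some s → L[i+1]? = some t → s.b = t.a → ¬(s.headB ∧ t.headA) →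
      s.b ∈ S →
      ¬(((s.k = .bw ∨ s.k = .un) ∧ ¬ G.Strongly s.b s.a) ∨
        ((t.k = .fw ∨ t.k = .un) ∧ ¬ G.Strongly t.a t.b))) := by
  rw [MixedGraph.SigmaBlockedWalk] at h
  push_neg at h
  obtain ⟨h1, h2, h3, h4⟩ := h
  refine ⟨h1, h2, fun i v hc => ?_, fun i s t hs ht hst hnc hmem hdisj => ?_⟩
  · have := h3 i v hc
    obtain ⟨d, hd1, hd2⟩ := this
    exact ⟨d, hd1, hd2⟩
  · rcases hdisj with ⟨hk, hstr⟩ | ⟨hk, hstr⟩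
    · exact hstr ((h4 i s t hs ht hst (fun hB hA => hnc ⟨hB, hA⟩) hmem).1 hk)
    · exact hstr ((h4 i s t hs ht hst (fun hB hA => hnc ⟨hB, hA⟩) hmem).2 hk)

/-- The main surgery lemma: a one-sided weak union property of σ-separation. -/
lemma weak_union_aux (G : MixedGraph V) (A B C D : Set V) (hD : D ⊆ B)
    (h : ∀ a ∈ A, ∀ b ∈ B, G.SigmaSep C a b) :
    ∀ a ∈ A, ∀ b ∈ B, G.SigmaSep (C ∪ D) a b := by
  intro a ha b hb L hL
  by_contra hnb
  obtain ⟨h1, h2, h3, h4⟩ := not_blocked_parts hnb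
  by_cases hex : ∃ i, ∃ v, ColliderAt L i v ∧ ∀ d, Relation.ReflTransGen G.dir v d → d ∉ C
  · -- there is a collider with no descendant in C; take the first one and reroute
    obtain ⟨i₀, hi₀, hmin⟩ := Nat.lt_wfRel.wf.has_min
      {i | ∃ v, ColliderAt L i v ∧ ∀ d, Relation.ReflTransGen G.dir v d → d ∉ C} hex
    obtain ⟨v, hcol, hnoC⟩ := hi₀
    obtain ⟨s0, t0, hs0, ht0, hs0b, ht0a, hs0h, ht0h⟩ := hcol
    obtain ⟨d, hvd, hdCD⟩ := h3 i₀ v ⟨s0, t0, hs0, ht0, hs0b, ht0a, hs0h, ht0h⟩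
    have hdD : d ∈ D := hdCD.resolve_left (fun hc => hnoC d hvd hc)
    obtain ⟨l, hchain, hlast⟩ := List.exists_isChain_cons_of_relationReflTransGen hvd
    set P := pathSteps v l with hP
    set T := L.take (i₀ + 1) with hT
    have hi₀len : i₀ + 1 < L.length := by
      rcases List.getElem?_eq_some_iff.mp ht0 with ⟨hlt, _⟩
      exact hlt
    have hTlen : T.length = i₀ + 1 := by
      rw [hT, List.length_take]; omega
    have hTwalk : G.IsWalk a v T := by
      have := walk_take hL i₀ s0 hs0
      rwa [hs0b] at this
    have hPwalk : G.IsWalk v d P := by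
      have := pathSteps_isWalk (G := G) hchain
      rwa [hlast] at this
    have hwalk' : G.IsWalk a d (T ++ P) := isWalk_append hTwalk hPwalk
    have hTP : ∀ j, j ≤ i₀ → (T ++ P)[j]? = L[j]? := by
      intro j hj
      rw [List.getElem?_append, if_pos (by rw [hTlen]; omega), hT, List.getElem?_take,
        if_pos (by omega)]
    have hTPP : ∀ j, j ≥ i₀ + 1 → (T ++ P)[j]? = P[j - (i₀ + 1)]? := by
      intro j hj
      rw [List.getElem?_append, if_neg (by rw [hTlen]; omega), hTlen]
    have hblk := h a ha d (hD hdD) (T ++ P) hwalk'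
    rcases hblk with haC | hdC | ⟨i, w, hcolw, hnod⟩ | ⟨i, s, t, hsi, hti, hst, hnc, hsbC, hdisj⟩
    · exact h1 (Or.inl haC)
    · exact hnoC d hvd hdC
    · -- collider of the new walk
      obtain ⟨s, t, hsi, hti, hsb, hta, hsh, hth⟩ := hcolw
      by_cases hi : i + 1 ≤ i₀
      · have hsi' : L[i]? = some s := by rw [← hTP i (by omega)]; exact hsi
        have hti' : L[i+1]? = some t := by rw [← hTP (i+1) hi]; exact hti
        have hcolL : ColliderAt L i w := ⟨s, t, hsi', hti', hsb, hta, hsh, hth⟩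
        have hnotmem : i ∉ {i | ∃ v, ColliderAt L i v ∧
            ∀ d, Relation.ReflTransGen G.dir v d → d ∉ C} :=
          fun hmem => hmin i hmem (show i < i₀ by omega)
        rw [Set.mem_setOf_eq] at hnotmem
        push_neg at hnotmem
        obtain ⟨d', hd1', hd2'⟩ := hnotmem w hcolL
        exact hnod d' hd1' hd2'
      · have hti2 : P[i + 1 - (i₀ + 1)]? = some t := by
          rw [← hTPP (i+1) (by omega)]; exact hti
        obtain ⟨hk, _, _⟩ := pathSteps_mem hchain _ t hti2
        rcases hth with h' | h' <;> rw [hk] at h' <;> exact absurd h' (by decide)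
    · -- non-collider of the new walk
      by_cases hi : i + 1 ≤ i₀
      · have hsi' : L[i]? = some s := by rw [← hTP i (by omega)]; exact hsi
        have hti' : L[i+1]? = some t := by rw [← hTP (i+1) hi]; exact hti
        exact h4 i s t hsi' hti' hst hnc (Or.inl hsbC) hdisj
      · by_cases hi2 : i ≤ i₀
        · have hieq : i = i₀ := by omega
          subst hieq
          have hsi' : L[i]? = some s := by rw [← hTP i (by omega)]; exact hsi
          rw [hs0] at hsi'
          have hseq : s0 = s := Option.some.inj hsi'
          apply hnoC s.b
          · rw [← hseq, hs0b]
          · exact hsbC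
        · have hsi2 : P[i - (i₀ + 1)]? = some s := by
            rw [← hTPP i (by omega)]; exact hsi
          obtain ⟨_, _, hdesc⟩ := pathSteps_mem hchain _ s hsi2
          exact hnoC s.b hdesc hsbC
  · -- all colliders have descendants in C : L itself is open w.r.t. C
    have hblk := h a ha b hb L hL
    rcases hblk with haC | hbC | ⟨i, w, hcolw, hnod⟩ | ⟨i, s, t, hsi, hti, hst, hnc, hsbC, hdisj⟩
    · exact h1 (Or.inl haC)
    · exact h2 (Or.inl hbC)
    · exact hex ⟨i, w, hcolw, hnod⟩
    · exact h4 i s t hsi hti hst hnc (Or.inl hsbC) hdisj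

end GraphAux

namespace GraphAux

open MixedGraph

variable {V : Type} {G : MixedGraph V}

def flipK : StepKind → StepKind
  | .fw => .bw
  | .bw => .fw
  | .bi => .bi
  | .un => .un

def flipS (s : Step V) : Step V := ⟨s.b, s.a, flipK s.k⟩

def rev (L : List (Step V)) : List (Step V) := (L.map flipS).reverse

lemma flipS_ok {s : Step V} (h : s.ok G) : (flipS s).ok G := by
  obtain ⟨a, b, k⟩ := s
  cases k
  · exact h
  · exact h
  · exact G.bidir_symm h
  · exact G.undir_symm h

lemma headA_flipS (s : Step V) : (flipS s).headA ↔ s.headB := by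
  obtain ⟨a, b, k⟩ := s
  cases k <;> simp [flipS, flipK, Step.headA, Step.headB]

lemma headB_flipS (s : Step V) : (flipS s).headB ↔ s.headA := by
  obtain ⟨a, b, k⟩ := s
  cases k <;> simp [flipS, flipK, Step.headA, Step.headB]

lemma flipK_eq_bw {k : StepKind} : flipK k = .bw ↔ k = .fw := by cases k <;> simp [flipK]
lemma flipK_eq_fw {k : StepKind} : flipK k = .fw ↔ k = .bw := by cases k <;> simp [flipK]
lemma flipK_eq_un {k : StepKind} : flipK k = .un ↔ k = .un := by cases k <;> simp [flipK]

lemma rev_isWalk {x y : V} {L : List (Step V)} (h : G.IsWalk x y L) :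
    G.IsWalk y x (rev L) := by
  induction h with
  | nil a => exact .nil a
  | cons s L hok hw ih =>
    have hstep : G.IsWalk s.b s.a ([flipS s]) :=
      IsWalk.cons (flipS s) ([]) (flipS_ok hok) (IsWalk.nil s.a)
    simpa [rev] using isWalk_append ih hstep

lemma rev_getElem? {L : List (Step V)} {i : ℕ} (hi : i < L.length) :
    (rev L)[i]? = Option.map flipS L[L.length - 1 - i]? := by
  rw [rev, List.getElem?_reverse (by simpa using hi), List.getElem?_map]
  simp

lemma blocked_of_rev {S : Set V} {x y : V} {L : List (Step V)}
    (h : G.SigmaBlockedWalk S x y (rev L)) : G.SigmaBlockedWalk S y x L := by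
  rcases h with hx | hy | ⟨i, w, hcol, hnod⟩ | ⟨i, s, t, hsi, hti, hst, hnc, hsb, hdisj⟩
  · exact Or.inr (Or.inl hx)
  · exact Or.inl hy
  · -- collider
    obtain ⟨s, t, hsi, hti, hsb, hta, hsh, hth⟩ := hcol
    have hi1 : i + 1 < L.length := by
      have := (List.getElem?_eq_some_iff.mp hti).1
      simpa [rev] using this
    have hi0 : i < L.length := by omega
    rw [rev_getElem? hi0] at hsi
    rw [rev_getElem? hi1] at hti
    obtain ⟨s', hs', hfs'⟩ := Option.map_eq_some_iff.mp hsi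
    obtain ⟨t', ht', hft'⟩ := Option.map_eq_some_iff.mp hti
    subst hfs'
    subst hft'
    refine Or.inr (Or.inr (Or.inl ⟨L.length - 2 - i, w,
      ⟨t', s', ?_, ?_, ?_, ?_, ?_, ?_⟩, hnod⟩))
    · have he : L.length - 1 - (i + 1) = L.length - 2 - i := by omega
      rwa [he] at ht'
    · have he : L.length - 1 - i = L.length - 2 - i + 1 := by omega
      rwa [he] at hs'
    · exact hta
    · exact hsb
    · exact (headA_flipS t').mp hth
    · exact (headB_flipS s').mp hsh
  · -- non-collider
    have hi1 : i + 1 < L.length := by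
      have := (List.getElem?_eq_some_iff.mp hti).1
      simpa [rev] using this
    have hi0 : i < L.length := by omega
    rw [rev_getElem? hi0] at hsi
    rw [rev_getElem? hi1] at hti
    obtain ⟨s', hs', hfs'⟩ := Option.map_eq_some_iff.mp hsi
    obtain ⟨t', ht', hft'⟩ := Option.map_eq_some_iff.mp hti
    subst hfs'
    subst hft'
    refine Or.inr (Or.inr (Or.inr ⟨L.length - 2 - i, t', s', ?_, ?_, ?_, ?_, ?_, ?_⟩))
    · have he : L.length - 1 - (i + 1) = L.length - 2 - i := by omega
      rwa [he] at ht'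
    · have he : L.length - 1 - i = L.length - 2 - i + 1 := by omega
      rwa [he] at hs'
    · exact hst.symm
    · rintro ⟨hB, hA⟩
      exact hnc ⟨(headB_flipS s').mpr hA, (headA_flipS t').mpr hB⟩
    · show (flipS t').a ∈ S
      rw [← hst]
      exact hsb
    · rcases hdisj with ⟨hk, hstr⟩ | ⟨hk, hstr⟩
      · refine Or.inr ⟨?_, hstr⟩
        rcases hk with hk | hk
        · exact Or.inl (flipK_eq_bw.mp hk)
        · exact Or.inr (flipK_eq_un.mp hk)
      · refine Or.inl ⟨?_, hstr⟩
        rcases hk with hk | hk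
        · exact Or.inl (flipK_eq_fw.mp hk)
        · exact Or.inr (flipK_eq_un.mp hk)

lemma sigmaSep_symm {S : Set V} {a b : V} (h : G.SigmaSep S a b) : G.SigmaSep S b a :=
  fun L hL => blocked_of_rev (h (rev L) (rev_isWalk hL))

lemma sigmaSep_weak_union (G : MixedGraph V) (Y' Z' T : Set V)
    (hsep : ∀ y ∈ Y', ∀ z ∈ Z', G.SigmaSep T y z) (W : Set V) (hW : W ⊆ Y' ∪ Z') :
    ∀ y ∈ Y', ∀ z ∈ Z', G.SigmaSep (T ∪ W) y z := by
  have step1 := weak_union_aux G Y' Z' T (W ∩ Z') Set.inter_subset_right hsep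
  have step1' : ∀ z ∈ Z', ∀ y ∈ Y', G.SigmaSep (T ∪ W ∩ Z') z y :=
    fun z hz y hy => sigmaSep_symm (step1 y hy z hz)
  have step2 := weak_union_aux G Z' Y' (T ∪ W ∩ Z') (W ∩ Y') Set.inter_subset_right step1'
  intro y hy z hz
  have hres := sigmaSep_symm (step2 z hz y hy)
  have hWeq : T ∪ W ∩ Z' ∪ W ∩ Y' = T ∪ W := by
    rw [Set.union_assoc, ← Set.inter_union_distrib_left]
    congr 1
    rw [Set.inter_eq_left]
    intro w hw
    rcases hW hw with h | h
    · exact Or.inr h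
    · exact Or.inl h
  rwa [hWeq] at hres

end GraphAux


open MeasureTheory ProbabilityTheory MeasurableSpace

namespace CIAux

section Clean

variable {Ω : Type} {mΩ : MeasurableSpace Ω} {μ : Measure Ω} [IsProbabilityMeasure μ]

noncomputable def ind (A : Set Ω) : Ω → ℝ := A.indicator fun _ => (1 : ℝ)

lemma ind_nonneg (A : Set Ω) : (0 : Ω → ℝ) ≤ ind A := fun x => by
  by_cases h : x ∈ A <;> simp [ind, Set.indicator_apply, h]

lemma ind_le_one (A : Set Ω) : ind (Ω := Ω) A ≤ fun _ => (1 : ℝ) := fun x => by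
  by_cases h : x ∈ A <;> simp [ind, Set.indicator_apply, h]

lemma abs_ind_le_one (A : Set Ω) (x : Ω) : |ind A x| ≤ 1 := by
  by_cases h : x ∈ A <;> simp [ind, Set.indicator_apply, h]

lemma integrable_ind {A : Set Ω} (hA : MeasurableSet A) : Integrable (ind A) μ :=
  (integrable_const (1 : ℝ)).indicator hA

lemma stronglyMeasurable_ind {A : Set Ω} (hA : MeasurableSet A) :
    StronglyMeasurable (ind A) :=
  stronglyMeasurable_const.indicator hA

lemma W1 {f : Ω → ℝ} {s t : Set Ω} (ht : MeasurableSet t) :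
    ∫ x in s, t.indicator f x ∂μ = ∫ x in s ∩ t, f x ∂μ := setIntegral_indicator ht

lemma W2 {f g : Ω → ℝ} {s : Set Ω} (hs : MeasurableSet s) (h : ∀ x ∈ s, f x = g x) :
    ∫ x in s, f x ∂μ = ∫ x in s, g x ∂μ := setIntegral_congr_fun hs h

lemma W3 {f g : Ω → ℝ} {s : Set Ω} (hs : MeasurableSet s) (h : f =ᵐ[μ] g) :
    ∫ x in s, f x ∂μ = ∫ x in s, g x ∂μ := setIntegral_congr_ae hs (h.mono fun x hx _ => hx)

lemma W4 {f : Ω → ℝ} {u : Set Ω} (hu : MeasurableSet u) (hf : Integrable f μ) :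
    (∫ x in u, f x ∂μ) + ∫ x in uᶜ, f x ∂μ = ∫ x, f x ∂μ := integral_add_compl hu hf

lemma W5 {f : Ω → ℝ} {s : ℕ → Set Ω} (hm : ∀ i, MeasurableSet (s i))
    (hd : Pairwise (Function.onFun Disjoint s)) (hf : Integrable f μ) :
    ∫ x in ⋃ i, s i, f x ∂μ = ∑' i, ∫ x in s i, f x ∂μ :=
  (hasSum_integral_iUnion hm hd hf.integrableOn).tsum_eq.symm

lemma W6 {f : Ω → ℝ} (hf : Integrable f μ) (s : Set Ω) : IntegrableOn f s μ :=
  hf.integrableOn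

lemma Wmul_int {f g : Ω → ℝ} (hf : Integrable f μ) (hg : StronglyMeasurable g)
    (hgb : ∀ x, |g x| ≤ 1) : Integrable (fun x => f x * g x) μ := by
  refine Integrable.mono hf (hf.aestronglyMeasurable.mul hg.aestronglyMeasurable)
    (Filter.Eventually.of_forall fun x => ?_)
  rw [Real.norm_eq_abs, Real.norm_eq_abs, abs_mul]
  calc |f x| * |g x| ≤ |f x| * 1 := mul_le_mul_of_nonneg_left (hgb x) (abs_nonneg _)
    _ = |f x| := mul_one _

lemma ind_mul_ind (A B : Set Ω) (x : Ω) : ind A x * ind B x = ind (A ∩ B) x := by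
  by_cases hA : x ∈ A <;> by_cases hB : x ∈ B <;>
    simp [ind, Set.indicator_apply, hA, hB]

lemma indicator_ind (t B : Set Ω) (x : Ω) : t.indicator (ind B) x = ind (t ∩ B) x := by
  by_cases ht : x ∈ t <;> by_cases hB : x ∈ B <;>
    simp [ind, Set.indicator_apply, ht, hB]

lemma indicator_fun_ind (t : Set Ω) (g : Ω → ℝ) (x : Ω) :
    t.indicator g x = g x * ind t x := by
  by_cases ht : x ∈ t <;> simp [ind, Set.indicator_apply, ht]

end Clean

section Main

variable {Ω : Type} {mΩ : MeasurableSpace Ω} [StandardBorelSpace Ω]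
  {μ : Measure Ω} [IsProbabilityMeasure μ]
  {m' m₁ m₂ m₃ : MeasurableSpace Ω}

lemma norm_condexp_ind_le (hm : m' ≤ mΩ) {A : Set Ω} (hA : MeasurableSet[mΩ] A) :
    ∀ᵐ x ∂μ, ‖(μ[ind A|m']) x‖ ≤ 1 := by
  have h0 : 0 ≤ᵐ[μ] μ[ind A|m'] := condExp_nonneg (Filter.Eventually.of_forall (ind_nonneg A))
  have h1 : μ[ind A|m'] ≤ᵐ[μ] μ[(fun _ => (1:ℝ))|m'] :=
    condExp_mono (integrable_ind hA) (integrable_const 1)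
      (Filter.Eventually.of_forall (ind_le_one A))
  rw [condExp_const hm] at h1
  filter_upwards [h0, h1] with x hx0 hx1
  simp only [Pi.zero_apply] at hx0
  rw [Real.norm_eq_abs, abs_le]
  exact ⟨by linarith, hx1⟩

lemma sup_eq_generateFrom_inter (m' m₁ : MeasurableSpace Ω) :
    m' ⊔ m₁ = generateFrom
      {u | ∃ s t, MeasurableSet[m'] s ∧ MeasurableSet[m₁] t ∧ u = s ∩ t} := by
  apply le_antisymm
  · refine sup_le (fun s hs => ?_) (fun t ht => ?_)
    · exact GenerateMeasurable.basic _
        ⟨s, Set.univ, hs, @MeasurableSet.univ Ω m₁, (Set.inter_univ s).symm⟩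
    · exact GenerateMeasurable.basic _
        ⟨Set.univ, t, @MeasurableSet.univ Ω m', ht, (Set.univ_inter t).symm⟩
  · refine generateFrom_le ?_
    rintro u ⟨s, t, hs, ht, rfl⟩
    exact ((le_sup_left : m' ≤ m' ⊔ m₁) _ hs).inter ((le_sup_right : m₁ ≤ m' ⊔ m₁) _ ht)

lemma isPiSystem_inter_sets (m' m₁ : MeasurableSpace Ω) :
    IsPiSystem {u | ∃ s t, MeasurableSet[m'] s ∧ MeasurableSet[m₁] t ∧ u = s ∩ t} := by
  rintro u ⟨s1, t1, hs1, ht1, rfl⟩ v ⟨s2, t2, hs2, ht2, rfl⟩ -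
  exact ⟨s1 ∩ s2, t1 ∩ t2, hs1.inter hs2, ht1.inter ht2, by
    rw [Set.inter_inter_inter_comm]⟩

/-- Key lemma: if `m₁ ⊥ m₂ | m'` then `E[1_B | m' ⊔ m₁] = E[1_B | m']` for `B ∈ m₂`. -/
lemma condexp_ind_sup_of_condIndep (hm' : m' ≤ mΩ) (hm₁ : m₁ ≤ mΩ) (hm₂ : m₂ ≤ mΩ)
    (h : CondIndep m' m₁ m₂ hm' μ) {B : Set Ω} (hB : MeasurableSet[m₂] B) :
    μ[ind B|m' ⊔ m₁] =ᵐ[μ] μ[ind B|m'] := by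
  have hn : m' ⊔ m₁ ≤ mΩ := sup_le hm' hm₁
  have hB' : MeasurableSet[mΩ] B := hm₂ _ hB
  have hfint : Integrable (ind B) μ := integrable_ind hB'
  have key : ∀ ⦃u : Set Ω⦄, MeasurableSet[m' ⊔ m₁] u →
      ∫ x in u, (μ[ind B|m']) x ∂μ = ∫ x in u, ind B x ∂μ := by
    refine induction_on_inter (m := m' ⊔ m₁) (sup_eq_generateFrom_inter m' m₁)
      (isPiSystem_inter_sets m' m₁) (by simp) ?_ ?_ ?_
    · -- basic case
      rintro u ⟨s, t, hs, ht, rfl⟩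
      have hs' : MeasurableSet[mΩ] s := hm' _ hs
      have ht' : MeasurableSet[mΩ] t := hm₁ _ ht
      have hgmeas : StronglyMeasurable[m'] (μ[ind B|m']) := stronglyMeasurable_condExp
      have hpull : μ[(fun x => (μ[ind B|m']) x * ind t x)|m'] =ᵐ[μ]
          fun x => (μ[ind B|m']) x * (μ[ind t|m']) x :=
        condExp_stronglyMeasurable_mul_of_bound hm' hgmeas (integrable_ind ht') 1
          (norm_condexp_ind_le hm' hB')
      have hint_gt : Integrable (fun x => (μ[ind B|m']) x * ind t x) μ :=
        Wmul_int integrable_condExp (stronglyMeasurable_ind ht') (abs_ind_le_one t)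
      have hCI := (condIndep_iff m' m₁ m₂ hm' hm₁ hm₂ μ).mp h t B ht hB
      have hCI' : μ[ind (t ∩ B)|m'] =ᵐ[μ] fun x => (μ[ind t|m']) x * (μ[ind B|m']) x := hCI
      calc ∫ x in s ∩ t, (μ[ind B|m']) x ∂μ
          = ∫ x in s, t.indicator (μ[ind B|m']) x ∂μ := (W1 ht').symm
        _ = ∫ x in s, (fun x => (μ[ind B|m']) x * ind t x) x ∂μ :=
            W2 hs' (fun x _ => indicator_fun_ind t _ x)
        _ = ∫ x in s, (μ[(fun x => (μ[ind B|m']) x * ind t x)|m']) x ∂μ :=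
            (setIntegral_condExp hm' hint_gt hs).symm
        _ = ∫ x in s, (fun x => (μ[ind B|m']) x * (μ[ind t|m']) x) x ∂μ := W3 hs' hpull
        _ = ∫ x in s, (fun x => (μ[ind t|m']) x * (μ[ind B|m']) x) x ∂μ :=
            W2 hs' (fun x _ => mul_comm _ _)
        _ = ∫ x in s, (μ[ind (t ∩ B)|m']) x ∂μ := (W3 hs' hCI').symm
        _ = ∫ x in s, ind (t ∩ B) x ∂μ :=
            setIntegral_condExp hm' (integrable_ind (ht'.inter hB')) hs
        _ = ∫ x in s, t.indicator (ind B) x ∂μ :=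
            W2 (g := fun x => t.indicator (ind B) x) hs'
              (fun x _ => (indicator_ind t B x).symm)
        _ = ∫ x in s ∩ t, ind B x ∂μ := W1 ht'
    · -- complement
      intro u hu hC
      have hu' : MeasurableSet[mΩ] u := hn _ hu
      have h1 := W4 (μ := μ) hu' (integrable_condExp (f := ind B) (m := m'))
      have h2 := W4 (μ := μ) hu' hfint
      have h3 : ∫ x, (μ[ind B|m']) x ∂μ = ∫ x, ind B x ∂μ := integral_condExp hm'
      linarith
    · -- disjoint union
      intro f hdisj hmeas hC
      have hmeas' : ∀ i, MeasurableSet[mΩ] (f i) := fun i => hn _ (hmeas i)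
      calc ∫ x in ⋃ i, f i, (μ[ind B|m']) x ∂μ
          = ∑' i, ∫ x in f i, (μ[ind B|m']) x ∂μ :=
            W5 hmeas' hdisj (integrable_condExp (f := ind B) (m := m'))
        _ = ∑' i, ∫ x in f i, ind B x ∂μ := tsum_congr hC
        _ = ∫ x in ⋃ i, f i, ind B x ∂μ := (W5 hmeas' hdisj hfint).symm
  refine (ae_eq_condExp_of_forall_setIntegral_eq (μ := μ) hn hfint
    (fun s _ _ => W6 integrable_condExp s) (fun s hms _ => key hms)
    ((stronglyMeasurable_condExp.mono (le_sup_left : m' ≤ m' ⊔ m₁)).aestronglyMeasurable)).symm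

end Main

end CIAux

namespace CIAux

section Main2

variable {Ω : Type} {mΩ : MeasurableSpace Ω} [StandardBorelSpace Ω]
  {μ : Measure Ω} [IsProbabilityMeasure μ]
  {m' m₁ m₂ m₃ m₁' m₂' : MeasurableSpace Ω}

lemma condIndep_mono (hm' : m' ≤ mΩ) (h : CondIndep m' m₁ m₂ hm' μ)
    (h1 : m₁' ≤ m₁) (h2 : m₂' ≤ m₂) : CondIndep m' m₁' m₂' hm' μ :=
  fun t1 t2 ht1 ht2 => h t1 t2 (h1 _ ht1) (h2 _ ht2)

lemma condIndep_symm (hm' : m' ≤ mΩ) (h : CondIndep m' m₁ m₂ hm' μ) :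
    CondIndep m' m₂ m₁ hm' μ := ProbabilityTheory.Kernel.Indep.symm h

lemma condIndep_bot (hm' : m' ≤ mΩ) (hm₂ : m₂ ≤ mΩ) : CondIndep m' ⊥ m₂ hm' μ := by
  rw [condIndep_iff m' ⊥ m₂ hm' bot_le hm₂ μ]
  intro t1 t2 ht1 ht2
  rcases MeasurableSpace.measurableSet_bot_iff.mp ht1 with rfl | rfl
  · have h₀ : ((∅ : Set Ω) ∩ t2).indicator (fun _ => (1:ℝ)) = 0 := by
      rw [Set.empty_inter]; exact Set.indicator_empty _
    have h₀' : (∅ : Set Ω).indicator (fun _ => (1:ℝ)) = 0 := Set.indicator_empty _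
    rw [h₀, h₀', condExp_zero]
    refine Filter.Eventually.of_forall fun x => ?_
    simp
  · have h₁ : (Set.univ ∩ t2 : Set Ω) = t2 := Set.univ_inter _
    have h₂ : (Set.univ : Set Ω).indicator (fun _ => (1:ℝ)) = fun _ => 1 :=
      Set.indicator_univ _
    rw [h₁, h₂, condExp_const hm']
    refine Filter.Eventually.of_forall fun x => ?_
    simp

 set_option maxHeartbeats 1000000 in
set_option maxHeartbeats 1000000 in
/-- Contraction: `m₁ ⊥ m₃ | m'` and `m₂ ⊥ m₃ | m' ⊔ m₁` imply `m₁ ⊔ m₂ ⊥ m₃ | m'`. -/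
lemma condIndep_contraction (hm' : m' ≤ mΩ) (hm₁ : m₁ ≤ mΩ) (hm₂ : m₂ ≤ mΩ) (hm₃ : m₃ ≤ mΩ)
    (h13 : CondIndep m' m₁ m₃ hm' μ)
    (h23 : CondIndep (m' ⊔ m₁) m₂ m₃ (sup_le hm' hm₁) μ) :
    CondIndep m' (m₁ ⊔ m₂) m₃ hm' μ := by
  have hn : m' ⊔ m₁ ≤ mΩ := sup_le hm' hm₁
  have hsets : CondIndepSets m' hm'
      {u | ∃ s t, MeasurableSet[m₁] s ∧ MeasurableSet[m₂] t ∧ u = s ∩ t}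
      {u | MeasurableSet[m₃] u} μ := by
    rw [condIndepSets_iff m' hm' _ _ ?hm1 ?hm2 μ]
    case hm1 =>
      rintro u ⟨s, t, hs, ht, rfl⟩
      exact (hm₁ _ hs).inter (hm₂ _ ht)
    case hm2 => exact fun u hu => hm₃ _ hu
    rintro t1 C ⟨A, B, hA, hB, rfl⟩ hC
    have hA' : MeasurableSet[mΩ] A := hm₁ _ hA
    have hB' : MeasurableSet[mΩ] B := hm₂ _ hB
    have hC' : MeasurableSet[mΩ] C := hm₃ _ hC
    have hAn : MeasurableSet[m' ⊔ m₁] A := (le_sup_right : m₁ ≤ m' ⊔ m₁) _ hA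
    have h23' : μ[ind (B ∩ C)|m' ⊔ m₁] =ᵐ[μ]
        fun x => (μ[ind B|m' ⊔ m₁]) x * (μ[ind C|m' ⊔ m₁]) x :=
      (condIndep_iff (m' ⊔ m₁) m₂ m₃ hn hm₂ hm₃ μ).mp h23 B C hB hC
    have hL4 : μ[ind C|m' ⊔ m₁] =ᵐ[μ] μ[ind C|m'] :=
      condexp_ind_sup_of_condIndep hm' hm₁ hm₃ h13 hC
    have hpullA : μ[(fun x => ind A x * ind (B ∩ C) x)|m' ⊔ m₁] =ᵐ[μ]
        fun x => ind A x * (μ[ind (B ∩ C)|m' ⊔ m₁]) x :=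
      condExp_stronglyMeasurable_mul_of_bound hn (stronglyMeasurable_ind hAn)
        (integrable_ind (hB'.inter hC')) 1
        (Filter.Eventually.of_forall fun x => by
          rw [Real.norm_eq_abs]; exact abs_ind_le_one A x)
    have hpullAB : μ[(fun x => ind A x * ind B x)|m' ⊔ m₁] =ᵐ[μ]
        fun x => ind A x * (μ[ind B|m' ⊔ m₁]) x :=
      condExp_stronglyMeasurable_mul_of_bound hn (stronglyMeasurable_ind hAn)
        (integrable_ind hB') 1
        (Filter.Eventually.of_forall fun x => by
          rw [Real.norm_eq_abs]; exact abs_ind_le_one A x)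
    have e1 : ind (A ∩ B ∩ C) = fun x => ind A x * ind (B ∩ C) x := by
      funext x; rw [ind_mul_ind, Set.inter_assoc]
    have e2 : μ[ind (A ∩ B)|m' ⊔ m₁] =ᵐ[μ]
        fun x => ind A x * (μ[ind B|m' ⊔ m₁]) x := by
      have h : ind (A ∩ B) = fun x => ind A x * ind B x := by funext x; rw [ind_mul_ind]
      rw [h]; exact hpullAB
    have inner : μ[ind (A ∩ B ∩ C)|m' ⊔ m₁] =ᵐ[μ]
        fun x => (μ[ind C|m']) x * (μ[ind (A ∩ B)|m' ⊔ m₁]) x := by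
      rw [e1]
      filter_upwards [hpullA, h23', hL4, e2] with x h1 h2 h3 h4
      rw [h1, h2, h4, h3]
      ring
    have t1 : μ[ind (A ∩ B ∩ C)|m'] =ᵐ[μ] μ[(μ[ind (A ∩ B ∩ C)|m' ⊔ m₁])|m'] :=
      (condExp_condExp_of_le le_sup_left hn).symm
    have t2 : μ[(μ[ind (A ∩ B ∩ C)|m' ⊔ m₁])|m'] =ᵐ[μ]
        μ[(fun x => (μ[ind C|m']) x * (μ[ind (A ∩ B)|m' ⊔ m₁]) x)|m'] :=
      condExp_congr_ae inner
    have t3 : μ[(fun x => (μ[ind C|m']) x * (μ[ind (A ∩ B)|m' ⊔ m₁]) x)|m'] =ᵐ[μ]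
        fun x => (μ[ind C|m']) x * (μ[(μ[ind (A ∩ B)|m' ⊔ m₁])|m']) x :=
      condExp_stronglyMeasurable_mul_of_bound hm' stronglyMeasurable_condExp
        integrable_condExp 1 (norm_condexp_ind_le hm' hC')
    have t4 : μ[(μ[ind (A ∩ B)|m' ⊔ m₁])|m'] =ᵐ[μ] μ[ind (A ∩ B)|m'] :=
      condExp_condExp_of_le le_sup_left hn
    have final : μ[ind (A ∩ B ∩ C)|m'] =ᵐ[μ]
        fun x => (μ[ind (A ∩ B)|m']) x * (μ[ind C|m']) x := by
      refine ((t1.trans t2).trans t3).trans ?_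
      filter_upwards [t4] with x hx
      rw [hx]; ring
    exact final
  show ProbabilityTheory.Kernel.Indep (m₁ ⊔ m₂) m₃ (@condExpKernel Ω mΩ _ μ _ m') (μ.trim hm')
  exact ProbabilityTheory.Kernel.IndepSets.indep (sup_le hm₁ hm₂) hm₃
    (isPiSystem_inter_sets m₁ m₂) (@isPiSystem_measurableSet Ω m₃)
    (sup_eq_generateFrom_inter m₁ m₂)
    (@MeasurableSpace.generateFrom_measurableSet Ω m₃).symm hsets

end Main2

end CIAux


section Wrappers

open MeasureTheory ProbabilityTheory MixedGraph CIAux GraphAux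

variable {Ω V : Type} [mΩ : MeasurableSpace Ω] [StandardBorelSpace Ω]
  {μ : Measure Ω} [IsProbabilityMeasure μ] {X : V → Ω → ℝ}

lemma genOf_le (hX : ∀ v, Measurable (X v)) (A : Set V) : genOf X A ≤ mΩ :=
  iSup₂_le fun v _ => (hX v).comap_le

lemma genOf_empty : genOf X (∅ : Set V) = ⊥ := by simp [genOf]

lemma genOf_union (A B : Set V) : genOf X (A ∪ B) = genOf X A ⊔ genOf X B := by
  rw [genOf, genOf, genOf, iSup_union]

lemma genOf_mono {A B : Set V} (h : A ⊆ B) : genOf X A ≤ genOf X B :=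
  biSup_mono h

lemma gci_symm {A B W : Set V} (h : GroupCI μ X A B W) : GroupCI μ X B A W := by
  obtain ⟨hle, hc⟩ := h
  exact ⟨hle, condIndep_symm hle hc⟩

lemma gci_mono (hX : ∀ v, Measurable (X v)) {A B A' B' W : Set V}
    (h : GroupCI μ X A B W) (hA : A' ⊆ A) (hB : B' ⊆ B) : GroupCI μ X A' B' W := by
  obtain ⟨hle, hc⟩ := h
  exact ⟨hle, condIndep_mono hle hc (genOf_mono hA) (genOf_mono hB)⟩

lemma gci_empty (hX : ∀ v, Measurable (X v)) (B W : Set V) : GroupCI μ X ∅ B W := by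
  refine ⟨genOf_le hX W, ?_⟩
  rw [genOf_empty]
  exact condIndep_bot (genOf_le hX W) (genOf_le hX B)

lemma gci_contraction (hX : ∀ v, Measurable (X v)) {A B Cs W : Set V}
    (h1 : GroupCI μ X A Cs W) (h2 : GroupCI μ X B Cs (W ∪ A)) :
    GroupCI μ X (A ∪ B) Cs W := by
  obtain ⟨hle1, hc1⟩ := h1
  obtain ⟨hle2, hc2⟩ := h2
  refine ⟨hle1, ?_⟩
  rw [genOf_union]
  refine condIndep_contraction hle1 (genOf_le hX A) (genOf_le hX B) (genOf_le hX Cs) hc1 ?_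
  have e : genOf X (W ∪ A) = genOf X W ⊔ genOf X A := genOf_union W A
  revert hle2 hc2
  rw [e]
  intro hle2 hc2
  exact hc2

end Wrappers

open MeasureTheory ProbabilityTheory MixedGraph in
/-- Let `G` be a directed mixed graph over micro-variables with a
positive joint density, σ-Markovian and σ-faithful. For a partition `q` and a set
of groups `S`, two distinct groups `Y, Z ∉ S` are mutually conditionally
independent given the union `T = q ⁻¹' S` of the groups in `S` if and only if they
are pairwise conditionally independent given `T`. -/
theorem mutualCI_iff_pairwiseCI {Ω V I : Type} [MeasurableSpace Ω]
    [StandardBorelSpace Ω] [Fintype V] (μ : Measure Ω) [IsProbabilityMeasure μ]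
    (X : V → Ω → ℝ) (hX : ∀ v, Measurable (X v)) (hpos : HasPositiveDensity μ X)
    (G : MixedGraph V) (hDMG : G.IsDMG)
    (hM : SigmaMarkov G μ X) (hF : SigmaFaithful G μ X)
    (q : V → I) (hq : Function.Surjective q)
    (Y Z : I) (hYZ : Y ≠ Z) (S : Set I) (hY : Y ∉ S) (hZ : Z ∉ S) :
    GroupCI μ X (q ⁻¹' {Y}) (q ⁻¹' {Z}) (q ⁻¹' S) ↔
      ∀ y z, q y = Y → q z = Z → GroupCI μ X {y} {z} (q ⁻¹' S) := by
  classical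
  set T : Set V := q ⁻¹' S with hT
  set Y' : Set V := q ⁻¹' {Y} with hYd
  set Z' : Set V := q ⁻¹' {Z} with hZd
  constructor
  · -- mutual implies pairwise
    intro hmut y z hy hz
    refine gci_mono hX hmut ?_ ?_
    · intro w hw
      rw [Set.mem_singleton_iff] at hw
      subst hw
      simp [hYd, Set.mem_preimage, hy]
    · intro w hw
      rw [Set.mem_singleton_iff] at hw
      subst hw
      simp [hZd, Set.mem_preimage, hz]
  · -- pairwise implies mutual
    intro hpair
    have hsep : ∀ y ∈ Y', ∀ z ∈ Z', G.SigmaSep T y z := by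
      intro y hy z hz
      exact hF y z T (hpair y z hy hz)
    have hsepW : ∀ (W : Set V), W ⊆ Y' ∪ Z' → ∀ y ∈ Y', ∀ z ∈ Z',
        G.SigmaSep (T ∪ W) y z :=
      fun W hW => GraphAux.sigmaSep_weak_union G Y' Z' T hsep W hW
    have hMar : ∀ (W : Set V), W ⊆ Y' ∪ Z' → ∀ y ∈ Y', ∀ z ∈ Z',
        GroupCI μ X {y} {z} (T ∪ W) :=
      fun W hW y hy z hz => hM y z (T ∪ W) (hsepW W hW y hy z hz)
    have P1 : ∀ (A : Finset V), ↑A ⊆ Y' → ∀ z ∈ Z', ∀ (W : Finset V), ↑W ⊆ Z' →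
        GroupCI μ X ↑A {z} (T ∪ ↑W) := by
      intro A
      induction A using Finset.induction_on with
      | empty =>
        intro _ z hz W hW
        rw [Finset.coe_empty]
        exact gci_empty hX _ _
      | @insert y₀ A hy₀ ih =>
        intro hsub z hz W hW
        have hy₀' : y₀ ∈ Y' := hsub (by simp)
        have hA : ↑A ⊆ Y' := fun w hw => hsub (by simp [hw])
        have h1 : GroupCI μ X ↑A {z} (T ∪ ↑W) := ih hA z hz W hW
        have h2 : GroupCI μ X {y₀} {z} ((T ∪ ↑W) ∪ ↑A) := by
          have hh := hMar (↑W ∪ ↑A) (by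
            intro w hw
            rcases hw with hw | hw
            · exact Or.inr (hW hw)
            · exact Or.inl (hA hw)) y₀ hy₀' z hz
          rwa [← Set.union_assoc] at hh
        have h3 : GroupCI μ X (↑A ∪ {y₀}) {z} (T ∪ ↑W) := gci_contraction hX h1 h2
        have hco : (↑(insert y₀ A) : Set V) = ↑A ∪ {y₀} := by
          rw [Finset.coe_insert, Set.insert_eq, Set.union_comm]
        rwa [hco]
    have P2 : ∀ (B : Finset V), ↑B ⊆ Z' → GroupCI μ X Y' ↑B T := by
      intro B
      induction B using Finset.induction_on with
      | empty =>
        intro _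
        rw [Finset.coe_empty]
        exact gci_symm (gci_empty hX _ _)
      | @insert z₀ B hz₀ ih =>
        intro hsub
        have hz₀' : z₀ ∈ Z' := hsub (by simp)
        have hB : ↑B ⊆ Z' := fun w hw => hsub (by simp [hw])
        have h1 : GroupCI μ X ↑B Y' T := gci_symm (ih hB)
        have h2 : GroupCI μ X {z₀} Y' (T ∪ ↑B) := by
          have hh := P1 (Set.toFinite Y').toFinset (by rw [Set.Finite.coe_toFinset])
            z₀ hz₀' B hB
          rw [Set.Finite.coe_toFinset] at hh
          exact gci_symm hh
        have h3 : GroupCI μ X (↑B ∪ {z₀}) Y' T := gci_contraction hX h1 h2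
        have hco : (↑(insert z₀ B) : Set V) = ↑B ∪ {z₀} := by
          rw [Finset.coe_insert, Set.insert_eq, Set.union_comm]
        rw [hco]
        exact gci_symm h3
    have hfin := P2 (Set.toFinite Z').toFinset (by rw [Set.Finite.coe_toFinset])
    rwa [Set.Finite.coe_toFinset] at hfin
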